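/- Let (𝔛_k) be a stationary centered sequence with Gordin decomposition 𝔛_k = θ_k − θ_{k+1} + (𝔐_{k+1} − 𝔐_k) as above, where 𝔐 is an L² martingale and (θ_k) is stationary in the sense that 𝔼[𝔛_j ⋆ (θ₀−θ₁)] = 𝔼[𝔛_{j+ℓ} ⋆ (θ_ℓ−θ_{ℓ+1})] for all j,ℓ ≥ 1 (for a fixed bounded bilinear operation ⋆), and suppose 𝔼[𝔛_N ⋆ θ_N] → 𝔼[𝔛₀ ⋆ θ₀] and the remainder 𝔼[𝔛_N ⋆ θ₀ − θ_{N+1} ⋆ (𝔐₁−𝔐₀)] → 0 as N → ∞. Then Σ_{j=1}^∞ 𝔼[𝔛_j ⋆ 𝔛₀] = −𝔼[𝔛₀ ⋆ θ₀] + 𝔼[θ₁ ⋆ (𝔐₁ − 𝔐₀)]. -/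

import Mathlib

open MeasureTheory

lemma stmt12_tele {G : Type*} [AddCommGroup G] (g : ℕ → G) (N : ℕ) :
    ∑ j ∈ Finset.Icc 1 N, (g (N - j) - g (N - j + 1)) = g 0 - g N := by
  rw [← Finset.Ico_add_one_right_eq_Icc, Finset.sum_Ico_eq_sum_range]
  have h1 : ∀ i, g (N - (1 + i)) - g (N - (1 + i) + 1)
      = (fun i => g i - g (i + 1)) (N - 1 - i) := by
    intro i
    have : N - (1 + i) = N - 1 - i := by omega
    simp [this]
  simp only [h1]
  rw [show N + 1 - 1 = N from rfl, Finset.sum_range_reflect (fun i => g i - g (i + 1))]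
  simpa using Finset.sum_range_sub' g N

lemma stmt12_tele2 {G : Type*} [AddCommGroup G] (g : ℕ → G) (N : ℕ) :
    ∑ j ∈ Finset.Icc 1 N, (g j - g (j + 1)) = g 1 - g (N + 1) := by
  rw [← Finset.Ico_add_one_right_eq_Icc, Finset.sum_Ico_eq_sum_range]
  rw [show N + 1 - 1 = N from rfl]
  simpa [add_comm 1] using Finset.sum_range_sub' (fun i => g (i + 1)) N

/-- drift identity in the Gordin decomposition:
`Σ_{j≥1} 𝔼[𝔛_j ⋆ 𝔛₀] = −𝔼[𝔛₀ ⋆ θ₀] + 𝔼[θ₁ ⋆ (𝔐₁ − 𝔐₀)]` for a fixed continuous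
bilinear operation `⋆ = B`. -/
theorem stmt12 {Ω : Type*} [MeasurableSpace Ω] (μ : Measure Ω)
    [IsProbabilityMeasure μ]
    {E G : Type*} [NormedAddCommGroup E] [NormedSpace ℝ E] [FiniteDimensional ℝ E]
    [NormedAddCommGroup G] [NormedSpace ℝ G] [FiniteDimensional ℝ G]
    (B : E →L[ℝ] E →L[ℝ] G)
    (𝔛 θ 𝔐 : ℕ → Ω → E)
    -- Gordin decomposition
    (hdecomp : ∀ k, ∀ᵐ ω ∂μ, 𝔛 k ω = θ k ω - θ (k+1) ω + (𝔐 (k+1) ω - 𝔐 k ω))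
    -- integrability of the relevant products
    (hint1 : ∀ j k, Integrable (fun ω => B (𝔛 j ω) (θ k ω)) μ)
    (hint2 : ∀ j k, Integrable (fun ω => B (𝔛 j ω) (𝔛 k ω)) μ)
    (hint3 : ∀ j k, Integrable (fun ω => B (θ j ω) (𝔐 k ω)) μ)
    -- stationarity
    (hstat : ∀ j ℓ : ℕ, 1 ≤ j → 1 ≤ ℓ →
      ∫ ω, B (𝔛 j ω) (θ 0 ω - θ 1 ω) ∂μ
        = ∫ ω, B (𝔛 (j+ℓ) ω) (θ ℓ ω - θ (ℓ+1) ω) ∂μ)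
    -- orthogonality of martingale increments
    (horth : ∀ j : ℕ, 1 ≤ j →
      ∫ ω, B (𝔐 (j+1) ω - 𝔐 j ω) (𝔐 1 ω - 𝔐 0 ω) ∂μ = 0)
    -- asymptotics
    (hlim1 : Filter.Tendsto (fun N : ℕ => ∫ ω, B (𝔛 N ω) (θ N ω) ∂μ)
      Filter.atTop (nhds (∫ ω, B (𝔛 0 ω) (θ 0 ω) ∂μ)))
    (hlim2 : Filter.Tendsto
      (fun N : ℕ => ∫ ω, (B (𝔛 N ω) (θ 0 ω) - B (θ (N+1) ω) (𝔐 1 ω - 𝔐 0 ω)) ∂μ)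
      Filter.atTop (nhds 0)) :
    Filter.Tendsto (fun N : ℕ => ∑ j ∈ Finset.Icc 1 N, ∫ ω, B (𝔛 j ω) (𝔛 0 ω) ∂μ)
      Filter.atTop
      (nhds (-(∫ ω, B (𝔛 0 ω) (θ 0 ω) ∂μ)
        + ∫ ω, B (θ 1 ω) (𝔐 1 ω - 𝔐 0 ω) ∂μ)) := by
  have hintc : ∀ j, Integrable (fun ω => B (θ j ω) (𝔐 1 ω - 𝔐 0 ω)) μ := by
    intro j
    have := (hint3 j 1).sub (hint3 j 0)
    simp only [map_sub]
    exact this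
  have hintm : ∀ j, Integrable (fun ω => B (𝔛 j ω) (𝔐 1 ω - 𝔐 0 ω)) μ := by
    intro j
    have hI : Integrable
        (fun ω => B (𝔛 j ω) (𝔛 0 ω) - B (𝔛 j ω) (θ 0 ω) + B (𝔛 j ω) (θ 1 ω)) μ :=
      ((hint2 j 0).sub (hint1 j 0)).add (hint1 j 1)
    refine hI.congr ?_
    filter_upwards [hdecomp 0] with ω h0
    simp only [h0, map_add, map_sub]
    abel
  have hintd : ∀ j, Integrable
      (fun ω => B (𝔐 (j+1) ω - 𝔐 j ω) (𝔐 1 ω - 𝔐 0 ω)) μ := by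
    intro j
    have hI : Integrable
        (fun ω => B (𝔛 j ω) (𝔐 1 ω - 𝔐 0 ω)
          - (B (θ j ω) (𝔐 1 ω - 𝔐 0 ω) - B (θ (j+1) ω) (𝔐 1 ω - 𝔐 0 ω))) μ :=
      (hintm j).sub ((hintc j).sub (hintc (j+1)))
    refine hI.congr ?_
    filter_upwards [hdecomp j] with ω hj
    simp only [hj, map_add, map_sub, ContinuousLinearMap.add_apply,
      ContinuousLinearMap.sub_apply]
    abel
  have I1 : ∀ j, ∫ ω, B (𝔛 j ω) (𝔛 0 ω) ∂μ
      = (∫ ω, B (𝔛 j ω) (θ 0 ω) ∂μ - ∫ ω, B (𝔛 j ω) (θ 1 ω) ∂μ)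
        + ∫ ω, B (𝔛 j ω) (𝔐 1 ω - 𝔐 0 ω) ∂μ := by
    intro j
    have hsub : Integrable (fun ω => B (𝔛 j ω) (θ 0 ω) - B (𝔛 j ω) (θ 1 ω)) μ :=
      (hint1 j 0).sub (hint1 j 1)
    have step : ∫ ω, B (𝔛 j ω) (𝔛 0 ω) ∂μ
        = ∫ ω, (B (𝔛 j ω) (θ 0 ω) - B (𝔛 j ω) (θ 1 ω)
            + B (𝔛 j ω) (𝔐 1 ω - 𝔐 0 ω)) ∂μ := by
      refine integral_congr_ae ?_
      filter_upwards [hdecomp 0] with ω h0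
      simp only [h0, map_add, map_sub]
    rw [step, integral_add hsub (hintm j), integral_sub (hint1 j 0) (hint1 j 1)]
  have I2 : ∀ j, 1 ≤ j → ∫ ω, B (𝔛 j ω) (𝔐 1 ω - 𝔐 0 ω) ∂μ
      = ∫ ω, B (θ j ω) (𝔐 1 ω - 𝔐 0 ω) ∂μ
        - ∫ ω, B (θ (j+1) ω) (𝔐 1 ω - 𝔐 0 ω) ∂μ := by
    intro j hj
    have hsub : Integrable
        (fun ω => B (θ j ω) (𝔐 1 ω - 𝔐 0 ω) - B (θ (j+1) ω) (𝔐 1 ω - 𝔐 0 ω)) μ :=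
      (hintc j).sub (hintc (j+1))
    have step : ∫ ω, B (𝔛 j ω) (𝔐 1 ω - 𝔐 0 ω) ∂μ
        = ∫ ω, (B (θ j ω) (𝔐 1 ω - 𝔐 0 ω) - B (θ (j+1) ω) (𝔐 1 ω - 𝔐 0 ω)
            + B (𝔐 (j+1) ω - 𝔐 j ω) (𝔐 1 ω - 𝔐 0 ω)) ∂μ := by
      refine integral_congr_ae ?_
      filter_upwards [hdecomp j] with ω hjω
      simp only [hjω, map_add, map_sub, ContinuousLinearMap.add_apply,
        ContinuousLinearMap.sub_apply]
      abel
    rw [step, integral_add hsub (hintd j), horth j hj, add_zero,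
      integral_sub (hintc j) (hintc (j+1))]
  have I3 : ∀ N, 1 ≤ N →
      ∑ j ∈ Finset.Icc 1 N,
        (∫ ω, B (𝔛 j ω) (θ 0 ω) ∂μ - ∫ ω, B (𝔛 j ω) (θ 1 ω) ∂μ)
      = ∫ ω, B (𝔛 N ω) (θ 0 ω) ∂μ - ∫ ω, B (𝔛 N ω) (θ N ω) ∂μ := by
    intro N hN
    have hterm : ∀ j ∈ Finset.Icc 1 N,
        (∫ ω, B (𝔛 j ω) (θ 0 ω) ∂μ - ∫ ω, B (𝔛 j ω) (θ 1 ω) ∂μ)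
        = ((fun k => ∫ ω, B (𝔛 N ω) (θ k ω) ∂μ) (N - j)
          - (fun k => ∫ ω, B (𝔛 N ω) (θ k ω) ∂μ) (N - j + 1)) := by
      intro j hj
      simp only [Finset.mem_Icc] at hj
      rcases eq_or_lt_of_le hj.2 with h | h
      · subst h
        simp
      · have hℓ : 1 ≤ N - j := by omega
        have hjN : j + (N - j) = N := by omega
        have hs := hstat j (N - j) hj.1 hℓ
        rw [hjN] at hs
        have lhs : ∫ ω, B (𝔛 j ω) (θ 0 ω - θ 1 ω) ∂μ
            = ∫ ω, B (𝔛 j ω) (θ 0 ω) ∂μ - ∫ ω, B (𝔛 j ω) (θ 1 ω) ∂μ := by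
          rw [← integral_sub (hint1 j 0) (hint1 j 1)]
          simp [map_sub]
        have rhs : ∫ ω, B (𝔛 N ω) (θ (N - j) ω - θ (N - j + 1) ω) ∂μ
            = ∫ ω, B (𝔛 N ω) (θ (N - j) ω) ∂μ
              - ∫ ω, B (𝔛 N ω) (θ (N - j + 1) ω) ∂μ := by
          rw [← integral_sub (hint1 N (N - j)) (hint1 N (N - j + 1))]
          simp [map_sub]
        rw [lhs, rhs] at hs
        exact hs
    rw [Finset.sum_congr rfl hterm,
      stmt12_tele (fun k => ∫ ω, B (𝔛 N ω) (θ k ω) ∂μ) N]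
  have key : ∀ N, 1 ≤ N →
      ∑ j ∈ Finset.Icc 1 N, ∫ ω, B (𝔛 j ω) (𝔛 0 ω) ∂μ
      = (∫ ω, (B (𝔛 N ω) (θ 0 ω) - B (θ (N+1) ω) (𝔐 1 ω - 𝔐 0 ω)) ∂μ)
        - ∫ ω, B (𝔛 N ω) (θ N ω) ∂μ
        + ∫ ω, B (θ 1 ω) (𝔐 1 ω - 𝔐 0 ω) ∂μ := by
    intro N hN
    have split : ∑ j ∈ Finset.Icc 1 N, ∫ ω, B (𝔛 j ω) (𝔛 0 ω) ∂μ
        = (∑ j ∈ Finset.Icc 1 N,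
            (∫ ω, B (𝔛 j ω) (θ 0 ω) ∂μ - ∫ ω, B (𝔛 j ω) (θ 1 ω) ∂μ))
          + ∑ j ∈ Finset.Icc 1 N, ∫ ω, B (𝔛 j ω) (𝔐 1 ω - 𝔐 0 ω) ∂μ := by
      rw [← Finset.sum_add_distrib]
      exact Finset.sum_congr rfl fun j _ => I1 j
    have sum2 : ∑ j ∈ Finset.Icc 1 N, ∫ ω, B (𝔛 j ω) (𝔐 1 ω - 𝔐 0 ω) ∂μ
        = ∫ ω, B (θ 1 ω) (𝔐 1 ω - 𝔐 0 ω) ∂μ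
          - ∫ ω, B (θ (N+1) ω) (𝔐 1 ω - 𝔐 0 ω) ∂μ := by
      rw [Finset.sum_congr rfl (fun j hj => I2 j (Finset.mem_Icc.mp hj).1)]
      exact stmt12_tele2 (fun k => ∫ ω, B (θ k ω) (𝔐 1 ω - 𝔐 0 ω) ∂μ) N
    rw [split, sum2, I3 N hN, integral_sub (hint1 N 0) (hintc (N+1))]
    abel
  have T : Filter.Tendsto
      (fun N : ℕ => (∫ ω, (B (𝔛 N ω) (θ 0 ω) - B (θ (N+1) ω) (𝔐 1 ω - 𝔐 0 ω)) ∂μ)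
        - ∫ ω, B (𝔛 N ω) (θ N ω) ∂μ
        + ∫ ω, B (θ 1 ω) (𝔐 1 ω - 𝔐 0 ω) ∂μ)
      Filter.atTop
      (nhds (0 - (∫ ω, B (𝔛 0 ω) (θ 0 ω) ∂μ)
        + ∫ ω, B (θ 1 ω) (𝔐 1 ω - 𝔐 0 ω) ∂μ)) :=
    (hlim2.sub hlim1).add tendsto_const_nhds
  rw [zero_sub] at T
  refine T.congr' ?_
  filter_upwards [Filter.eventually_ge_atTop 1] with N hN
  exact (key N hN).symm
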